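/- Let A ∈ ℝ^{m×n} have columns of unit ℓ2-norm and mutual coherence μ, and let k ≥ 2 be an integer with μ < 1/(k−1). Then for every vector h ∈ ℝⁿ and every subset E ⊂ {1,…,n} with |E| = k, ‖h_E‖₂ ≤ α₁‖Ah‖₂ + α₂‖h_{E^c}‖₁, where α₁ = √(1+(k−1)μ)/(1−(k−1)μ) and α₂ = √k·μ/(1−(k−1)μ). -/
import Mathlib


noncomputable def l2norm {ι : Type*} [Fintype ι] (v : ι → ℝ) : ℝ :=
  Real.sqrt (∑ i, (v i) ^ 2)

noncomputable def l1norm {ι : Type*} [Fintype ι] (v : ι → ℝ) : ℝ :=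
  ∑ i, |v i|

noncomputable def linfnorm {ι : Type*} [Fintype ι] (v : ι → ℝ) : ℝ :=
  ⨆ i, |v i|

/-- The mutual coherence of a matrix: the largest absolute inner product
between two distinct columns. -/
noncomputable def mutualCoherence {m n : ℕ} (A : Matrix (Fin m) (Fin n) ℝ) : ℝ :=
  ⨆ p : {p : Fin n × Fin n // p.1 ≠ p.2}, |∑ r, A r p.1.1 * A r p.1.2|

/-- `restrict v E` agrees with `v` on `E` and vanishes outside of `E`. -/
def restrict {n : ℕ} (v : Fin n → ℝ) (E : Finset (Fin n)) : Fin n → ℝ :=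
  fun i => if i ∈ E then v i else 0

/-- A vector is `k`-sparse if it has at most `k` nonzero entries. -/
def sparse {n : ℕ} (k : ℕ) (v : Fin n → ℝ) : Prop :=
  (Finset.univ.filter fun i => v i ≠ 0).card ≤ k

lemma double_sum_swap {m n : ℕ} (A : Matrix (Fin m) (Fin n) ℝ) (u v : Fin n → ℝ) :
    ∑ r, A.mulVec u r * A.mulVec v r
      = ∑ i, ∑ j, u i * v j * (∑ r, A r i * A r j) := by
  simp only [Matrix.mulVec, dotProduct]
  calc ∑ r, (∑ i, A r i * u i) * (∑ j, A r j * v j)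
      = ∑ r, ∑ i, ∑ j, (A r i * u i) * (A r j * v j) := by
        simp_rw [Finset.sum_mul_sum]
    _ = ∑ i, ∑ r, ∑ j, (A r i * u i) * (A r j * v j) := Finset.sum_comm
    _ = ∑ i, ∑ j, ∑ r, (A r i * u i) * (A r j * v j) :=
        Finset.sum_congr rfl fun i _ => Finset.sum_comm
    _ = ∑ i, ∑ j, u i * v j * ∑ r, A r i * A r j := by
        refine Finset.sum_congr rfl fun i _ => Finset.sum_congr rfl fun j _ => ?_
        rw [Finset.mul_sum]
        exact Finset.sum_congr rfl fun r _ => by ring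

theorem stmt_3 {m n : ℕ} (A : Matrix (Fin m) (Fin n) ℝ)
    (hA : ∀ j, l2norm (fun i => A i j) = 1)
    (k : ℕ) (hk : 2 ≤ k)
    (hμ : mutualCoherence A < 1 / ((k : ℝ) - 1))
    (h : Fin n → ℝ) (E : Finset (Fin n)) (hE : E.card = k) :
    l2norm (restrict h E) ≤
      Real.sqrt (1 + ((k : ℝ) - 1) * mutualCoherence A)
          / (1 - ((k : ℝ) - 1) * mutualCoherence A) * l2norm (A.mulVec h)
        + Real.sqrt k * mutualCoherence A
          / (1 - ((k : ℝ) - 1) * mutualCoherence A) * l1norm (restrict h Eᶜ) := by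
  classical
  set μ := mutualCoherence A with hμdef
  -- basic numerology
  have hkn : k ≤ n := by
    have := Finset.card_le_univ E
    simpa [hE] using this
  have hn2 : 2 ≤ n := le_trans hk hkn
  have hk1 : (1:ℝ) ≤ (k:ℝ) - 1 := by
    have : (2:ℝ) ≤ (k:ℝ) := by exact_mod_cast hk
    linarith
  -- unit columns, squared
  have hA2 : ∀ j, ∑ r, A r j ^ 2 = 1 := by
    intro j
    have h1 := hA j
    unfold l2norm at h1
    have hnn : 0 ≤ ∑ r, A r j ^ 2 := Finset.sum_nonneg fun r _ => sq_nonneg _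
    nlinarith [Real.sq_sqrt hnn, h1]
  -- Cauchy-Schwarz bound for column inner products
  have hCS1 : ∀ i j : Fin n, |∑ r, A r i * A r j| ≤ 1 := by
    intro i j
    have hsq := Finset.sum_mul_sq_le_sq_mul_sq Finset.univ (fun r => A r i) (fun r => A r j)
    rw [hA2, hA2, one_mul] at hsq
    rw [← Real.sqrt_one]
    exact Real.abs_le_sqrt hsq
  have hbdd : BddAbove (Set.range fun p : {p : Fin n × Fin n // p.1 ≠ p.2} =>
      |∑ r, A r p.1.1 * A r p.1.2|) := by
    refine ⟨1, ?_⟩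
    rintro x ⟨p, rfl⟩
    exact hCS1 _ _
  have hSle : ∀ i j : Fin n, i ≠ j → |∑ r, A r i * A r j| ≤ μ := by
    intro i j hij
    exact le_ciSup hbdd ⟨(i, j), hij⟩
  have hμ0 : 0 ≤ μ := by
    have h01 : (⟨0, by omega⟩ : Fin n) ≠ (⟨1, by omega⟩ : Fin n) := by
      simp [Fin.ext_iff]
    exact le_trans (abs_nonneg _) (hSle _ _ h01)
  have hc1 : ((k:ℝ) - 1) * μ < 1 := by
    have hkpos : (0:ℝ) < (k:ℝ) - 1 := by linarith
    calc ((k:ℝ) - 1) * μ < ((k:ℝ) - 1) * (1 / ((k:ℝ) - 1)) := by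
          exact mul_lt_mul_of_pos_left hμ hkpos
      _ = 1 := by field_simp
  have hden : 0 < 1 - ((k:ℝ) - 1) * μ := by linarith
  -- the vectors
  set x := restrict h E with hxdef
  set y := restrict h Eᶜ with hydef
  have hxy : ∀ i, x i + y i = h i := by
    intro i
    by_cases hi : i ∈ E <;> simp [hxdef, hydef, restrict, hi]
  have hxy0 : ∀ i, x i * y i = 0 := by
    intro i
    by_cases hi : i ∈ E <;> simp [hxdef, hydef, restrict, hi]
  set X := ∑ i, x i ^ 2 with hXdef
  have hX0 : 0 ≤ X := Finset.sum_nonneg fun i _ => sq_nonneg _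
  set L1x := ∑ i, |x i| with hL1xdef
  set L1y := ∑ i, |y i| with hL1ydef
  have hL1y0 : 0 ≤ L1y := Finset.sum_nonneg fun i _ => abs_nonneg _
  -- l1-l2 bound for x (supported on E of size k)
  have hL1x : L1x ≤ Real.sqrt k * Real.sqrt X := by
    have hx_supp : ∀ i, i ∉ E → x i = 0 := by
      intro i hi; simp [hxdef, restrict, hi]
    have h1 : L1x = ∑ i ∈ E, 1 * |x i| := by
      rw [hL1xdef, ← Finset.sum_subset (Finset.subset_univ E)]
      · simp
      · intro i _ hi; simp [hx_supp i hi]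
    have h2 : ∑ i ∈ E, 1 * |x i| ≤
        Real.sqrt (∑ i ∈ E, (1:ℝ)^2) * Real.sqrt (∑ i ∈ E, |x i|^2) :=
      Real.sum_mul_le_sqrt_mul_sqrt E _ _
    have h3 : (∑ i ∈ E, (1:ℝ)^2) = (k:ℝ) := by simp [hE]
    have h4 : (∑ i ∈ E, |x i|^2) ≤ X := by
      rw [hXdef]
      refine Finset.sum_le_sum_of_subset_of_nonneg (Finset.subset_univ E) ?_ |>.trans_eq ?_
      · intro i _ _; positivity
      · exact Finset.sum_congr rfl fun i _ => by rw [sq_abs]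
    calc L1x = ∑ i ∈ E, 1 * |x i| := h1
      _ ≤ Real.sqrt (∑ i ∈ E, (1:ℝ)^2) * Real.sqrt (∑ i ∈ E, |x i|^2) := h2
      _ ≤ Real.sqrt k * Real.sqrt X := by
          rw [h3]
          exact mul_le_mul_of_nonneg_left (Real.sqrt_le_sqrt h4) (Real.sqrt_nonneg _)
  -- also L1x^2 ≤ k * X
  have hL1x0 : 0 ≤ L1x := Finset.sum_nonneg fun i _ => abs_nonneg _
  have hL1xsq : L1x ^ 2 ≤ (k:ℝ) * X := by
    have := mul_self_le_mul_self hL1x0 hL1x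
    calc L1x ^ 2 = L1x * L1x := sq L1x
      _ ≤ (Real.sqrt k * Real.sqrt X) * (Real.sqrt k * Real.sqrt X) := this
      _ = (Real.sqrt k * Real.sqrt k) * (Real.sqrt X * Real.sqrt X) := by ring
      _ = (k:ℝ) * X := by
          rw [Real.mul_self_sqrt (by positivity), Real.mul_self_sqrt hX0]
  -- Gram expansions
  have hGxx := double_sum_swap A x x
  have hGxy := double_sum_swap A x y
  have hGxh := double_sum_swap A x h
  -- split G x x into diagonal and off-diagonal
  have hdiag : ∀ i : Fin n, ∑ r, A r i * A r i = 1 := by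
    intro i
    rw [← hA2 i]
    exact Finset.sum_congr rfl fun r _ => (sq (A r i)).symm
  have hGxx_split : ∀ i : Fin n,
      ∑ j, x i * x j * (∑ r, A r i * A r j)
        = x i ^ 2 + ∑ j ∈ Finset.univ.erase i, x i * x j * (∑ r, A r i * A r j) := by
    intro i
    rw [← Finset.add_sum_erase Finset.univ _ (Finset.mem_univ i), hdiag i]
    ring_nf
  -- off-diagonal bound
  have hoff : |∑ i, ∑ j ∈ Finset.univ.erase i, x i * x j * (∑ r, A r i * A r j)|
      ≤ ((k:ℝ) - 1) * μ * X := by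
    have step1 : |∑ i, ∑ j ∈ Finset.univ.erase i, x i * x j * (∑ r, A r i * A r j)|
        ≤ ∑ i, ∑ j ∈ Finset.univ.erase i, |x i| * |x j| * μ := by
      refine (Finset.abs_sum_le_sum_abs _ _).trans (Finset.sum_le_sum fun i _ => ?_)
      refine (Finset.abs_sum_le_sum_abs _ _).trans (Finset.sum_le_sum fun j hj => ?_)
      rw [abs_mul, abs_mul]
      exact mul_le_mul_of_nonneg_left (hSle i j (Ne.symm (Finset.ne_of_mem_erase hj)))
        (by positivity)
    have step2 : ∑ i, ∑ j ∈ Finset.univ.erase i, |x i| * |x j| * μ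
        = (L1x ^ 2 - X) * μ := by
      have : ∀ i : Fin n, ∑ j ∈ Finset.univ.erase i, |x i| * |x j| * μ
          = (∑ j, |x i| * |x j| * μ) - |x i| * |x i| * μ := by
        intro i
        rw [← Finset.add_sum_erase Finset.univ _ (Finset.mem_univ i)]
        ring
      rw [Finset.sum_congr rfl fun i _ => this i, Finset.sum_sub_distrib]
      have e1 : ∑ i : Fin n, ∑ j, |x i| * |x j| * μ = L1x ^ 2 * μ := by
        simp_rw [← Finset.sum_mul, ← Finset.mul_sum]
        rw [← hL1xdef]
        ring_nf
        rw [← Finset.sum_mul, ← hL1xdef]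
        ring
      have e2 : ∑ i : Fin n, |x i| * |x i| * μ = X * μ := by
        rw [← Finset.sum_mul]
        congr 1
        exact Finset.sum_congr rfl fun i _ => by rw [← sq_abs]; ring
      rw [e1, e2]; ring
    refine step1.trans (step2.trans_le ?_)
    have : L1x ^ 2 - X ≤ ((k:ℝ) - 1) * X := by linarith
    calc (L1x ^ 2 - X) * μ ≤ ((k:ℝ) - 1) * X * μ :=
          mul_le_mul_of_nonneg_right this hμ0
      _ = ((k:ℝ) - 1) * μ * X := by ring
  have hGxx_eq : ∑ r, A.mulVec x r * A.mulVec x r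
      = X + ∑ i, ∑ j ∈ Finset.univ.erase i, x i * x j * (∑ r, A r i * A r j) := by
    rw [hGxx, Finset.sum_congr rfl fun i _ => hGxx_split i, Finset.sum_add_distrib]
  -- bounds on ‖Ax‖²
  have hAx_lower : (1 - ((k:ℝ)-1) * μ) * X ≤ ∑ r, A.mulVec x r * A.mulVec x r := by
    rw [hGxx_eq]
    have := abs_le.mp hoff
    linarith [this.1]
  have hAx_upper : ∑ r, A.mulVec x r * A.mulVec x r ≤ (1 + ((k:ℝ)-1) * μ) * X := by
    rw [hGxx_eq]
    have := abs_le.mp hoff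
    linarith [this.2]
  -- bound on cross term
  have hGxy_bd : |∑ r, A.mulVec x r * A.mulVec y r| ≤ μ * L1x * L1y := by
    rw [hGxy]
    have step1 : |∑ i, ∑ j, x i * y j * (∑ r, A r i * A r j)|
        ≤ ∑ i, ∑ j, |x i| * |y j| * μ := by
      refine (Finset.abs_sum_le_sum_abs _ _).trans (Finset.sum_le_sum fun i _ => ?_)
      refine (Finset.abs_sum_le_sum_abs _ _).trans (Finset.sum_le_sum fun j _ => ?_)
      by_cases hij : i = j
      · subst hij
        rw [hxy0 i, zero_mul, abs_zero]
        positivity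
      · rw [abs_mul, abs_mul]
        exact mul_le_mul_of_nonneg_left (hSle i j hij) (by positivity)
    refine step1.trans ?_
    have heq : ∑ i, ∑ j, |x i| * |y j| * μ = μ * L1x * L1y := by
      calc ∑ i, ∑ j, |x i| * |y j| * μ
          = ∑ i, |x i| * (L1y * μ) := by
            refine Finset.sum_congr rfl fun i _ => ?_
            rw [hL1ydef, Finset.sum_mul, Finset.mul_sum]
            exact Finset.sum_congr rfl fun j _ => by ring
        _ = L1x * (L1y * μ) := by rw [← Finset.sum_mul, ← hL1xdef]
        _ = μ * L1x * L1y := by ring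
    linarith [heq.le, heq.ge]
  -- linearity: G x h = G x x + G x y
  have hGlin : ∑ r, A.mulVec x r * A.mulVec h r
      = (∑ r, A.mulVec x r * A.mulVec x r) + ∑ r, A.mulVec x r * A.mulVec y r := by
    rw [hGxx, hGxy, hGxh, ← Finset.sum_add_distrib]
    refine Finset.sum_congr rfl fun i _ => ?_
    rw [← Finset.sum_add_distrib]
    refine Finset.sum_congr rfl fun j _ => ?_
    rw [← hxy j]; ring
  -- Cauchy-Schwarz on G x h
  set NAh := l2norm (A.mulVec h) with hNAhdef
  have hNAh0 : 0 ≤ NAh := Real.sqrt_nonneg _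
  have hGxh_bd : ∑ r, A.mulVec x r * A.mulVec h r
      ≤ Real.sqrt (1 + ((k:ℝ)-1) * μ) * Real.sqrt X * NAh := by
    have hcs := Real.sum_mul_le_sqrt_mul_sqrt Finset.univ (A.mulVec x) (A.mulVec h)
    have e1 : Real.sqrt (∑ r, A.mulVec x r ^ 2) ≤ Real.sqrt (1 + ((k:ℝ)-1)*μ) * Real.sqrt X := by
      rw [← Real.sqrt_mul (by nlinarith)]
      refine Real.sqrt_le_sqrt ?_
      calc ∑ r, A.mulVec x r ^ 2 = ∑ r, A.mulVec x r * A.mulVec x r :=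
            Finset.sum_congr rfl fun r _ => sq (A.mulVec x r)
        _ ≤ (1 + ((k:ℝ)-1) * μ) * X := hAx_upper
    have e2 : Real.sqrt (∑ r, A.mulVec h r ^ 2) = NAh := rfl
    calc ∑ r, A.mulVec x r * A.mulVec h r
        ≤ Real.sqrt (∑ r, A.mulVec x r ^ 2) * Real.sqrt (∑ r, A.mulVec h r ^ 2) := hcs
      _ ≤ (Real.sqrt (1 + ((k:ℝ)-1)*μ) * Real.sqrt X) * NAh := by
          rw [e2]
          exact mul_le_mul_of_nonneg_right e1 hNAh0
  -- key inequality
  have hkey : (1 - ((k:ℝ)-1)*μ) * X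
      ≤ Real.sqrt (1 + ((k:ℝ)-1)*μ) * Real.sqrt X * NAh
        + μ * (Real.sqrt k * Real.sqrt X) * L1y := by
    have h1 : (1 - ((k:ℝ)-1)*μ) * X ≤ ∑ r, A.mulVec x r * A.mulVec x r := hAx_lower
    have h2 : ∑ r, A.mulVec x r * A.mulVec x r
        = (∑ r, A.mulVec x r * A.mulVec h r) - ∑ r, A.mulVec x r * A.mulVec y r := by
      rw [hGlin]; ring
    have h3 := (abs_le.mp hGxy_bd).1
    have h4 : μ * L1x * L1y ≤ μ * (Real.sqrt k * Real.sqrt X) * L1y :=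
      mul_le_mul_of_nonneg_right (mul_le_mul_of_nonneg_left hL1x hμ0) hL1y0
    linarith [hGxh_bd]
  -- conclude
  have hgoal_eq : l2norm x = Real.sqrt X := rfl
  have hL1y_eq : l1norm y = L1y := rfl
  rw [hgoal_eq, hL1y_eq]
  set t := Real.sqrt X with htdef
  have ht0 : 0 ≤ t := Real.sqrt_nonneg _
  have htsq : t * t = X := Real.mul_self_sqrt hX0
  set B := Real.sqrt (1 + ((k:ℝ)-1)*μ) * NAh + μ * Real.sqrt k * L1y with hBdef
  have hkey2 : (1 - ((k:ℝ)-1)*μ) * (t * t) ≤ B * t := by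
    rw [htsq]
    calc (1 - ((k:ℝ)-1)*μ) * X
        ≤ Real.sqrt (1 + ((k:ℝ)-1)*μ) * t * NAh + μ * (Real.sqrt k * t) * L1y := hkey
      _ = B * t := by rw [hBdef]; ring
  rcases eq_or_lt_of_le ht0 with ht | ht
  · rw [← ht]
    have h6 : 0 ≤ Real.sqrt (1 + ((k:ℝ)-1) * μ) / (1 - ((k:ℝ)-1) * μ) * NAh := by
      apply mul_nonneg _ hNAh0
      exact div_nonneg (Real.sqrt_nonneg _) hden.le
    have h7 : 0 ≤ Real.sqrt k * μ / (1 - ((k:ℝ)-1) * μ) * L1y := by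
      apply mul_nonneg _ hL1y0
      exact div_nonneg (mul_nonneg (Real.sqrt_nonneg _) hμ0) hden.le
    linarith
  · have hkey' : (1 - ((k:ℝ)-1)*μ) * t ≤ B := by
      have h5 : ((1 - ((k:ℝ)-1)*μ) * t) * t ≤ B * t := by
        calc ((1 - ((k:ℝ)-1)*μ) * t) * t = (1 - ((k:ℝ)-1)*μ) * (t * t) := by ring
          _ ≤ B * t := hkey2
      exact le_of_mul_le_mul_right h5 ht
    rw [div_mul_eq_mul_div, div_mul_eq_mul_div, ← add_div, le_div_iff₀ hden]
    have hBexp : Real.sqrt (1 + ((k:ℝ)-1) * μ) * NAh + Real.sqrt k * μ * L1y = B := by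
      rw [hBdef]; ring
    linarith
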